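/- Let $a>0$ and let $T_1,T_2,T_3:(-a,a)\to M_n(\mathbb{C})$ be continuously differentiable and satisfy the reduced Nahm equations $T_1' = [T_2,T_3]$, $T_2' = [T_3,T_1]$, $T_3' = [T_1,T_2]$ on $(-a,a)$. If the symmetry condition $T_i(0) = T_i(0)^T$ holds for $i=1,2,3$, then $T_i(-z) = T_i(z)^T$ for all $z\in(-a,a)$ and all $i=1,2,3$. -/

import Mathlib

open Matrix Set

namespace NahmAux4

variable {n : ℕ}

abbrev M (n : ℕ) := Fin n → Fin n → ℂ
abbrev E (n : ℕ) := M n × M n × M n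

/-- commutator, written entrywise -/
noncomputable def comm (A B : M n) : M n := fun i j => ∑ l, (A i l * B l j - B i l * A l j)

lemma comm_eq (A B : Matrix (Fin n) (Fin n) ℂ) :
    comm (A : M n) (B : M n) = fun i j => (A * B - B * A) i j := by
  funext i j
  simp [comm, Matrix.mul_apply, Matrix.sub_apply, Finset.sum_sub_distrib]

lemma comm_transpose (A B : Matrix (Fin n) (Fin n) ℂ) :
    comm (fun i j => A j i) (fun i j => B j i) = fun i j => (B * A - A * B) j i := by
  funext i j
  simp [comm, Matrix.mul_apply, Matrix.sub_apply, Finset.sum_sub_distrib, mul_comm]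

lemma contDiff_comm (g h : E n → M n) (hg : ContDiff ℝ 1 g) (hh : ContDiff ℝ 1 h) :
    ContDiff ℝ 1 (fun x => comm (g x) (h x)) := by
  rw [contDiff_pi]; intro i
  rw [contDiff_pi]; intro j
  apply ContDiff.sum
  intro l _
  have e1 : ContDiff ℝ 1 (fun x => g x i l) := contDiff_pi.mp (contDiff_pi.mp hg i) l
  have e2 : ContDiff ℝ 1 (fun x => h x l j) := contDiff_pi.mp (contDiff_pi.mp hh l) j
  have e3 : ContDiff ℝ 1 (fun x => h x i l) := contDiff_pi.mp (contDiff_pi.mp hh i) l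
  have e4 : ContDiff ℝ 1 (fun x => g x l j) := contDiff_pi.mp (contDiff_pi.mp hg l) j
  exact (e1.mul e2).sub (e3.mul e4)

noncomputable def vf : E n → E n := fun x => (comm x.2.1 x.2.2, comm x.2.2 x.1, comm x.1 x.2.1)

lemma contDiff_vf : ContDiff ℝ 1 (vf (n := n)) :=
  (contDiff_comm _ _ (contDiff_fst.comp contDiff_snd) (contDiff_snd.comp contDiff_snd)).prodMk
    ((contDiff_comm _ _ (contDiff_snd.comp contDiff_snd) contDiff_fst).prodMk
      (contDiff_comm _ _ contDiff_fst (contDiff_fst.comp contDiff_snd)))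

end NahmAux4

open NahmAux4 in
/-- A C¹ solution of the reduced Nahm equations on `(-a, a)` whose value
at `0` is symmetric satisfies `Tᵢ(-z) = Tᵢ(z)ᵀ` throughout. -/
theorem nahm_symmetry_from_symmetric_initial_condition {n : ℕ} (a : ℝ) (ha : 0 < a)
    (T1 T2 T3 T1' T2' T3' : ℝ → Matrix (Fin n) (Fin n) ℂ)
    (hT1 : ∀ z ∈ Ioo (-a) a, ∀ i j, HasDerivAt (fun t => T1 t i j) (T1' z i j) z)
    (hT2 : ∀ z ∈ Ioo (-a) a, ∀ i j, HasDerivAt (fun t => T2 t i j) (T2' z i j) z)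
    (hT3 : ∀ z ∈ Ioo (-a) a, ∀ i j, HasDerivAt (fun t => T3 t i j) (T3' z i j) z)
    (hT1' : ∀ i j, ContinuousOn (fun z => T1' z i j) (Ioo (-a) a))
    (hT2' : ∀ i j, ContinuousOn (fun z => T2' z i j) (Ioo (-a) a))
    (hT3' : ∀ i j, ContinuousOn (fun z => T3' z i j) (Ioo (-a) a))
    (hN1 : ∀ z ∈ Ioo (-a) a, T1' z = T2 z * T3 z - T3 z * T2 z)
    (hN2 : ∀ z ∈ Ioo (-a) a, T2' z = T3 z * T1 z - T1 z * T3 z)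
    (hN3 : ∀ z ∈ Ioo (-a) a, T3' z = T1 z * T2 z - T2 z * T1 z)
    (hsym1 : T1 0 = (T1 0)ᵀ) (hsym2 : T2 0 = (T2 0)ᵀ) (hsym3 : T3 0 = (T3 0)ᵀ) :
    ∀ z ∈ Ioo (-a) a,
      T1 (-z) = (T1 z)ᵀ ∧ T2 (-z) = (T2 z)ᵀ ∧ T3 (-z) = (T3 z)ᵀ := by
  set F : ℝ → E n := fun z =>
    ((fun i j => T1 z i j), (fun i j => T2 z i j), (fun i j => T3 z i j)) with hFdef
  set G : ℝ → E n := fun z =>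
    ((fun i j => T1 (-z) j i), (fun i j => T2 (-z) j i), (fun i j => T3 (-z) j i)) with hGdef
  -- F solves the ODE
  have hF' : ∀ z ∈ Ioo (-a) a, HasDerivAt F (vf (F z)) z := by
    intro z hz
    have h1 : HasDerivAt (fun z => ((fun i j => T1 z i j) : M n))
        (fun i j => T1' z i j) z := by
      rw [hasDerivAt_pi]; intro i; rw [hasDerivAt_pi]; intro j; exact hT1 z hz i j
    have h2 : HasDerivAt (fun z => ((fun i j => T2 z i j) : M n))
        (fun i j => T2' z i j) z := by
      rw [hasDerivAt_pi]; intro i; rw [hasDerivAt_pi]; intro j; exact hT2 z hz i j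
    have h3 : HasDerivAt (fun z => ((fun i j => T3 z i j) : M n))
        (fun i j => T3' z i j) z := by
      rw [hasDerivAt_pi]; intro i; rw [hasDerivAt_pi]; intro j; exact hT3 z hz i j
    have e1 : (fun i j => T1' z i j) = comm ((fun i j => T2 z i j) : M n) (fun i j => T3 z i j) := by
      funext i j
      simp [NahmAux4.comm, hN1 z hz, Matrix.mul_apply, Matrix.sub_apply, Finset.sum_sub_distrib]
    have e2 : (fun i j => T2' z i j) = comm ((fun i j => T3 z i j) : M n) (fun i j => T1 z i j) := by
      funext i j
      simp [NahmAux4.comm, hN2 z hz, Matrix.mul_apply, Matrix.sub_apply, Finset.sum_sub_distrib]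
    have e3 : (fun i j => T3' z i j) = comm ((fun i j => T1 z i j) : M n) (fun i j => T2 z i j) := by
      funext i j
      simp [NahmAux4.comm, hN3 z hz, Matrix.mul_apply, Matrix.sub_apply, Finset.sum_sub_distrib]
    exact (e1 ▸ h1).prodMk ((e2 ▸ h2).prodMk (e3 ▸ h3))
  -- G solves the same ODE
  have hG' : ∀ z ∈ Ioo (-a) a, HasDerivAt G (vf (G z)) z := by
    intro z hz
    have hz' : -z ∈ Ioo (-a) a := by
      obtain ⟨hz1, hz2⟩ := hz
      constructor <;> linarith
    have key : ∀ (T T' : ℝ → Matrix (Fin n) (Fin n) ℂ)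
        (hT : ∀ z ∈ Ioo (-a) a, ∀ i j, HasDerivAt (fun t => T t i j) (T' z i j) z),
        HasDerivAt (fun z => ((fun i j => T (-z) j i) : M n))
          (fun i j => -(T' (-z) j i)) z := by
      intro T T' hT
      rw [hasDerivAt_pi]; intro i; rw [hasDerivAt_pi]; intro j
      have := (hT (-z) hz' j i).scomp z (hasDerivAt_neg z)
      simpa [Function.comp_def] using this
    have h1 := key T1 T1' hT1
    have h2 := key T2 T2' hT2
    have h3 := key T3 T3' hT3
    have e1 : (fun i j => -(T1' (-z) j i)) =
        comm ((fun i j => T2 (-z) j i) : M n) (fun i j => T3 (-z) j i) := by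
      rw [comm_transpose]
      funext i j
      rw [hN1 (-z) hz']
      simp [Matrix.sub_apply]
    have e2 : (fun i j => -(T2' (-z) j i)) =
        comm ((fun i j => T3 (-z) j i) : M n) (fun i j => T1 (-z) j i) := by
      rw [comm_transpose]
      funext i j
      rw [hN2 (-z) hz']
      simp [Matrix.sub_apply]
    have e3 : (fun i j => -(T3' (-z) j i)) =
        comm ((fun i j => T1 (-z) j i) : M n) (fun i j => T2 (-z) j i) := by
      rw [comm_transpose]
      funext i j
      rw [hN3 (-z) hz']
      simp [Matrix.sub_apply]
    exact (e1 ▸ h1).prodMk ((e2 ▸ h2).prodMk (e3 ▸ h3))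
  -- same initial condition
  have h0 : (0 : ℝ) ∈ Ioo (-a) a := ⟨neg_neg_iff_pos.mpr ha, ha⟩
  have hFG0 : F 0 = G 0 := by
    simp only [hFdef, hGdef, neg_zero]
    refine Prod.ext ?_ (Prod.ext ?_ ?_) <;> funext i j
    · exact congrFun (congrFun hsym1 i) j
    · exact congrFun (congrFun hsym2 i) j
    · exact congrFun (congrFun hsym3 i) j
  -- the set of equality is open
  have hOpenEq : IsOpen {z | z ∈ Ioo (-a) a ∧ F z = G z} := by
    rw [isOpen_iff_mem_nhds]
    rintro z₀ ⟨hz₀, heq⟩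
    obtain ⟨K, t, ht, hlip⟩ := (contDiff_vf (n := n)).contDiffAt.exists_lipschitzOnWith (x := F z₀)
    have hIoo : Ioo (-a) a ∈ nhds z₀ := (isOpen_Ioo).mem_nhds hz₀
    have hFt : F ⁻¹' t ∈ nhds z₀ := (hF' z₀ hz₀).continuousAt ht
    have hGt : G ⁻¹' t ∈ nhds z₀ := (hG' z₀ hz₀).continuousAt (heq ▸ ht)
    have hf : ∀ᶠ z in nhds z₀, HasDerivAt F (vf (F z)) z ∧ F z ∈ t := by
      filter_upwards [hIoo, hFt] with z hz hFz
      exact ⟨hF' z hz, hFz⟩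
    have hg : ∀ᶠ z in nhds z₀, HasDerivAt G (vf (G z)) z ∧ G z ∈ t := by
      filter_upwards [hIoo, hGt] with z hz hGz
      exact ⟨hG' z hz, hGz⟩
    have huniq : F =ᶠ[nhds z₀] G :=
      ODE_solution_unique_of_eventually (v := fun _ => vf) (s := fun _ => t)
        (Filter.Eventually.of_forall fun _ => hlip) hf hg heq
    filter_upwards [hIoo, huniq] with z hz hzeq
    exact ⟨hz, hzeq⟩
  -- the set of inequality is open
  have hOpenNe : IsOpen {z | z ∈ Ioo (-a) a ∧ F z ≠ G z} := by
    rw [isOpen_iff_mem_nhds]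
    rintro z₀ ⟨hz₀, hne⟩
    have hIoo : Ioo (-a) a ∈ nhds z₀ := (isOpen_Ioo).mem_nhds hz₀
    have hc : ContinuousAt (fun z => F z - G z) z₀ :=
      ((hF' z₀ hz₀).continuousAt).sub ((hG' z₀ hz₀).continuousAt)
    have : ∀ᶠ z in nhds z₀, F z - G z ≠ 0 := hc.eventually_ne (sub_ne_zero.mpr hne)
    filter_upwards [hIoo, this] with z hz hzne
    exact ⟨hz, sub_ne_zero.mp hzne⟩
  -- connectedness argument
  have hmain : ∀ z ∈ Ioo (-a) a, F z = G z := by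
    intro z hz
    by_contra hne
    obtain ⟨w, hw, hws, hwu⟩ := isPreconnected_Ioo (a := -a) (b := a)
      _ _ hOpenEq hOpenNe
      (fun x hx => by by_cases h : F x = G x; exacts [Or.inl ⟨hx, h⟩, Or.inr ⟨hx, h⟩])
      ⟨0, h0, h0, hFG0⟩ ⟨z, hz, hz, hne⟩
    exact hwu.2 hws.2
  -- conclude
  intro z hz
  have hFG := hmain z hz
  have h1 := congrArg Prod.fst hFG
  have h2 := congrArg (fun p : E n => p.2.1) hFG
  have h3 := congrArg (fun p : E n => p.2.2) hFG
  refine ⟨?_, ?_, ?_⟩ <;> ext i j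
  · exact (congrFun (congrFun h1 j) i).symm
  · exact (congrFun (congrFun h2 j) i).symm
  · exact (congrFun (congrFun h3 j) i).symm
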